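/- arXiv:1409.8565 — 2 statements merged into one kernel-verified Lean document; each statement's English description precedes it below -/
import Mathlib

section
/- Let F ∈ ℝ^{p×r} and G ∈ ℝ^{m×r} be matrices with orthonormal columns, K ∈ ℝ^{r×r}, and D = diag(d_1,…,d_r) with d_1 ≥ … ≥ d_r > 0. If E ∈ ℝ^{p×m} satisfies ‖E‖_op ≤ 1 and ‖E‖_* ≤ r (nuclear norm), then ⟨F K G', F G' − E⟩ ≥ (d_r/2)·‖F G' − E‖_F² − ‖K − D‖_F·‖F G' − E‖_F, where ⟨A,B⟩ = Tr(A'B). -/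
open Matrix Real

/-- Vector of singular values of a real matrix (square roots of eigenvalues of `Aᴴ * A`). -/
noncomputable def singVals {p m : ℕ} (A : Matrix (Fin p) (Fin m) ℝ) : Fin m → ℝ :=
  fun i => Real.sqrt ((show (Aᵀ * A).IsHermitian by
    simpa [Matrix.conjTranspose_eq_transpose_of_trivial] using
      Matrix.isHermitian_conjTranspose_mul_self A).eigenvalues i)

/-- Operator (spectral) norm: largest singular value. -/
noncomputable def opNorm {p m : ℕ} (A : Matrix (Fin p) (Fin m) ℝ) : ℝ :=
  ⨆ i, singVals A i

/-- Nuclear norm: sum of singular values. -/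
noncomputable def nucNorm {p m : ℕ} (A : Matrix (Fin p) (Fin m) ℝ) : ℝ :=
  ∑ i, singVals A i

/-- Frobenius norm. -/
noncomputable def frob {p m : ℕ} (A : Matrix (Fin p) (Fin m) ℝ) : ℝ :=
  Real.sqrt (∑ i, ∑ j, (A i j) ^ 2)

namespace CurvAux

lemma frob_nonneg {p m : ℕ} (A : Matrix (Fin p) (Fin m) ℝ) : 0 ≤ frob A :=
  Real.sqrt_nonneg _

lemma frob_sq {p m : ℕ} (A : Matrix (Fin p) (Fin m) ℝ) :
    frob A ^ 2 = ∑ i, ∑ j, (A i j) ^ 2 := by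
  rw [frob, Real.sq_sqrt]
  positivity

lemma trace_transpose_mul {p m : ℕ} (A B : Matrix (Fin p) (Fin m) ℝ) :
    Matrix.trace (Aᵀ * B) = ∑ i, ∑ j, A i j * B i j := by
  simp only [Matrix.trace, Matrix.diag, Matrix.mul_apply, Matrix.transpose_apply]
  exact Finset.sum_comm

lemma frob_sq_trace {p m : ℕ} (A : Matrix (Fin p) (Fin m) ℝ) :
    Matrix.trace (Aᵀ * A) = frob A ^ 2 := by
  rw [frob_sq, trace_transpose_mul]
  simp [sq]

lemma frob_eq_sqrt_trace {p m : ℕ} (A : Matrix (Fin p) (Fin m) ℝ) :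
    frob A = Real.sqrt (Matrix.trace (Aᵀ * A)) := by
  rw [trace_transpose_mul, frob]
  simp [sq]

/-- Cauchy–Schwarz for the trace inner product. -/
lemma abs_trace_le {p m : ℕ} (A B : Matrix (Fin p) (Fin m) ℝ) :
    |Matrix.trace (Aᵀ * B)| ≤ frob A * frob B := by
  have h1 : Matrix.trace (Aᵀ * B) = ∑ q : Fin p × Fin m, A q.1 q.2 * B q.1 q.2 := by
    rw [trace_transpose_mul, Fintype.sum_prod_type]
  have h2 : frob A ^ 2 = ∑ q : Fin p × Fin m, (A q.1 q.2) ^ 2 := by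
    rw [frob_sq, Fintype.sum_prod_type]
  have h3 : frob B ^ 2 = ∑ q : Fin p × Fin m, (B q.1 q.2) ^ 2 := by
    rw [frob_sq, Fintype.sum_prod_type]
  have hcs := Finset.sum_mul_sq_le_sq_mul_sq Finset.univ
    (fun q : Fin p × Fin m => A q.1 q.2) (fun q : Fin p × Fin m => B q.1 q.2)
  have : (Matrix.trace (Aᵀ * B)) ^ 2 ≤ (frob A * frob B) ^ 2 := by
    rw [h1, mul_pow, h2, h3]; exact hcs
  calc |Matrix.trace (Aᵀ * B)| = Real.sqrt ((Matrix.trace (Aᵀ * B)) ^ 2) :=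
        (Real.sqrt_sq_eq_abs _).symm
    _ ≤ Real.sqrt ((frob A * frob B) ^ 2) := Real.sqrt_le_sqrt this
    _ = frob A * frob B := Real.sqrt_sq (mul_nonneg (frob_nonneg A) (frob_nonneg B))


lemma trace_eq_sum_eigen {n : ℕ} (A : Matrix (Fin n) (Fin n) ℝ) (hA : A.IsHermitian) :
    A.trace = ∑ i, hA.eigenvalues i := by
  simpa using hA.trace_eq_sum_eigenvalues

lemma quad_form_le {n : ℕ} (A : Matrix (Fin n) (Fin n) ℝ) (hA : A.IsHermitian) (c : ℝ)
    (h : ∀ i, hA.eigenvalues i ≤ c) (y : Fin n → ℝ) :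
    y ⬝ᵥ (A *ᵥ y) ≤ c * (y ⬝ᵥ y) := by
  set U : Matrix (Fin n) (Fin n) ℝ := (hA.eigenvectorUnitary : Matrix (Fin n) (Fin n) ℝ) with hU
  have hsU : star U = Uᵀ := by
    rw [Matrix.star_eq_conjTranspose, Matrix.conjTranspose_eq_transpose_of_trivial]
  set z : Fin n → ℝ := Uᵀ *ᵥ y with hz
  have hUU : U * Uᵀ = 1 := by
    rw [← hsU]; exact Matrix.mem_unitaryGroup_iff.mp hA.eigenvectorUnitary.2
  have claim1 : y ⬝ᵥ (A *ᵥ y) = ∑ i, hA.eigenvalues i * (z i)^2 := by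
    conv_lhs => rw [hA.spectral_theorem, Unitary.conjStarAlgAut_apply]
    rw [hsU, ← Matrix.mulVec_mulVec, ← Matrix.mulVec_mulVec,
      Matrix.dotProduct_mulVec, ← Matrix.mulVec_transpose]
    simp [mulVec_diagonal, dotProduct, ← hz, sq]
    exact Finset.sum_congr rfl fun i _ => by ring
  have claim2 : ∑ i, (z i)^2 = y ⬝ᵥ y := by
    have : ∑ i, (z i)^2 = z ⬝ᵥ (Uᵀ *ᵥ y) := by simp [dotProduct, ← hz, sq]
    rw [this, Matrix.dotProduct_mulVec, Matrix.vecMul_transpose, hz,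
      Matrix.mulVec_mulVec, hUU, Matrix.one_mulVec]
  calc y ⬝ᵥ (A *ᵥ y) = ∑ i, hA.eigenvalues i * (z i)^2 := claim1
    _ ≤ ∑ i, c * (z i)^2 := by
        apply Finset.sum_le_sum; intro i _
        exact mul_le_mul_of_nonneg_right (h i) (sq_nonneg _)
    _ = c * (y ⬝ᵥ y) := by rw [← Finset.mul_sum, claim2]

lemma singVals_le_opNorm {p m : ℕ} (A : Matrix (Fin p) (Fin m) ℝ) (i : Fin m) :
    singVals A i ≤ opNorm A :=
  le_ciSup (Set.Finite.bddAbove (Set.finite_range _)) i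

lemma singVals_nonneg {p m : ℕ} (A : Matrix (Fin p) (Fin m) ℝ) (i : Fin m) :
    0 ≤ singVals A i := Real.sqrt_nonneg _

lemma herm_tt {p m : ℕ} (A : Matrix (Fin p) (Fin m) ℝ) : (Aᵀ * A).IsHermitian := by
  simpa [Matrix.conjTranspose_eq_transpose_of_trivial] using
    Matrix.isHermitian_conjTranspose_mul_self A

lemma singVals_sq {p m : ℕ} (A : Matrix (Fin p) (Fin m) ℝ) (i : Fin m) :
    singVals A i ^ 2 = (herm_tt A).eigenvalues i :=
  Real.sq_sqrt (by
    have hP : (Aᵀ * A).PosSemidef := by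
      simpa [Matrix.conjTranspose_eq_transpose_of_trivial] using
        Matrix.posSemidef_conjTranspose_mul_self A
    exact hP.eigenvalues_nonneg i)

end CurvAux

open CurvAux in
/-- Curvature lemma: for `F ∈ O(p,r)`, `G ∈ O(m,r)`, `K ∈ ℝ^{r×r}`,
`D = diag(d)` with `d₁ ≥ … ≥ d_r > 0`, and `E` with operator norm at most 1 and
nuclear norm at most `r`,
`⟨F K G', F G' − E⟩ ≥ (d_r/2)‖F G' − E‖_F² − ‖K − D‖_F ‖F G' − E‖_F`. -/
theorem stmt0 {p m r : ℕ} (hr : 0 < r)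
    (F : Matrix (Fin p) (Fin r) ℝ) (G : Matrix (Fin m) (Fin r) ℝ)
    (K : Matrix (Fin r) (Fin r) ℝ) (d : Fin r → ℝ)
    (hF : Fᵀ * F = 1) (hG : Gᵀ * G = 1)
    (hanti : ∀ i j : Fin r, i ≤ j → d j ≤ d i) (hpos : ∀ i, 0 < d i)
    (E : Matrix (Fin p) (Fin m) ℝ) (hEop : opNorm E ≤ 1) (hEnuc : nucNorm E ≤ (r : ℝ)) :
    Matrix.trace ((F * K * Gᵀ)ᵀ * (F * Gᵀ - E)) ≥
      d ⟨r - 1, by omega⟩ / 2 * frob (F * Gᵀ - E) ^ 2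
        - frob (K - Matrix.diagonal d) * frob (F * Gᵀ - E) := by
  classical
  set D : Matrix (Fin r) (Fin r) ℝ := Matrix.diagonal d with hD
  set M : Matrix (Fin r) (Fin r) ℝ := K - Matrix.diagonal d with hM
  set Δ : Matrix (Fin p) (Fin m) ℝ := F * Gᵀ - E with hΔ
  set δ : ℝ := frob Δ with hδ
  set e : Matrix (Fin r) (Fin r) ℝ := Fᵀ * E * G with he_def
  set t : ℝ := Matrix.trace e with ht
  set dr : ℝ := d ⟨r - 1, by omega⟩ with hdr
  -- the sandwich identity
  have sandwich : ∀ N : Matrix (Fin r) (Fin r) ℝ,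
      Matrix.trace ((F * N * Gᵀ)ᵀ * Δ) =
        Matrix.trace Nᵀ - Matrix.trace (Nᵀ * e) := by
    intro N
    have hexp : (F * N * Gᵀ)ᵀ * Δ
        = G * (Nᵀ * (Fᵀ * (F * Gᵀ))) - G * (Nᵀ * (Fᵀ * E)) := by
      rw [hΔ, Matrix.mul_sub]
      simp only [Matrix.transpose_mul, Matrix.transpose_transpose, Matrix.mul_assoc]
    rw [hexp, Matrix.trace_sub, Matrix.trace_mul_comm G, Matrix.trace_mul_comm G,
      ← Matrix.mul_assoc Fᵀ F Gᵀ, hF, Matrix.one_mul,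
      Matrix.mul_assoc Nᵀ Gᵀ G, hG, Matrix.mul_one,
      Matrix.mul_assoc Nᵀ (Fᵀ * E) G]
  -- diagonal entries of e are at most 1
  have he1 : ∀ i : Fin r, e i i ≤ 1 := by
    intro i
    set x : Fin p → ℝ := fun a => F a i with hx_def
    set y : Fin m → ℝ := fun b => G b i with hy_def
    have hx : x ⬝ᵥ x = 1 := by
      have := congrFun (congrFun hF i) i
      simpa [Matrix.mul_apply, Matrix.one_apply, Matrix.transpose_apply, dotProduct,
        hx_def] using this
    have hy : y ⬝ᵥ y = 1 := by
      have := congrFun (congrFun hG i) i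
      simpa [Matrix.mul_apply, Matrix.one_apply, Matrix.transpose_apply, dotProduct,
        hy_def] using this
    have heq : e i i = x ⬝ᵥ (E *ᵥ y) := by
      rw [he_def, Matrix.mul_assoc]
      simp only [Matrix.mul_apply, Matrix.transpose_apply, dotProduct, Matrix.mulVec,
        dotProduct, hx_def, hy_def]
    have hcs : (x ⬝ᵥ (E *ᵥ y)) ^ 2 ≤ (x ⬝ᵥ x) * ((E *ᵥ y) ⬝ᵥ (E *ᵥ y)) := by
      have := Finset.sum_mul_sq_le_sq_mul_sq Finset.univ x (E *ᵥ y)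
      simpa [dotProduct, sq] using this
    have hEv : (E *ᵥ y) ⬝ᵥ (E *ᵥ y) = y ⬝ᵥ ((Eᴴ * E) *ᵥ y) := by
      rw [Matrix.dotProduct_mulVec, ← Matrix.transpose_transpose E,
        Matrix.vecMul_transpose, Matrix.transpose_transpose, Matrix.mulVec_mulVec,
        dotProduct_comm, Matrix.conjTranspose_eq_transpose_of_trivial]
    have hquad : y ⬝ᵥ ((Eᴴ * E) *ᵥ y) ≤ 1 * (y ⬝ᵥ y) := by
      rw [Matrix.conjTranspose_eq_transpose_of_trivial]
      apply quad_form_le _ (herm_tt E) 1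
      intro j
      have h1 : singVals E j ≤ 1 := le_trans (singVals_le_opNorm E j) hEop
      have h2 := singVals_sq E j
      nlinarith [singVals_nonneg E j]
    have : (e i i) ^ 2 ≤ 1 := by
      rw [heq]
      calc (x ⬝ᵥ (E *ᵥ y)) ^ 2 ≤ (x ⬝ᵥ x) * ((E *ᵥ y) ⬝ᵥ (E *ᵥ y)) := hcs
        _ = y ⬝ᵥ ((Eᴴ * E) *ᵥ y) := by rw [hx, hEv, one_mul]
        _ ≤ 1 * (y ⬝ᵥ y) := hquad
        _ = 1 := by rw [hy, mul_one]
    nlinarith [this]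
  -- Frobenius norm of E squared is at most r
  have hfrobE : frob E ^ 2 ≤ (r : ℝ) := by
    have h1 : frob E ^ 2 = ∑ i, (singVals E i) ^ 2 := by
      rw [← frob_sq_trace]
      have h2 : Eᵀ * E = Eᴴ * E := by
        rw [Matrix.conjTranspose_eq_transpose_of_trivial]
      rw [trace_eq_sum_eigen _ (herm_tt E)]
      exact Finset.sum_congr rfl fun i _ => (singVals_sq E i).symm
    have h3 : ∑ i, (singVals E i) ^ 2 ≤ ∑ i, singVals E i := by
      apply Finset.sum_le_sum
      intro i _
      have hs1 : singVals E i ≤ 1 := le_trans (singVals_le_opNorm E i) hEop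
      nlinarith [singVals_nonneg E i]
    calc frob E ^ 2 = ∑ i, (singVals E i) ^ 2 := h1
      _ ≤ ∑ i, singVals E i := h3
      _ ≤ (r : ℝ) := hEnuc
  -- δ² = r − 2t + ‖E‖_F²
  have hT1 : Matrix.trace ((F * Gᵀ)ᵀ * Δ) = (r : ℝ) - t := by
    have := sandwich 1
    rw [Matrix.mul_one] at this
    rw [this, Matrix.transpose_one, Matrix.one_mul, Matrix.trace_one]
    simp [ht]
  have hδsq : δ ^ 2 = (r : ℝ) - 2 * t + frob E ^ 2 := by
    have h1 : Δᵀ * Δ = (F * Gᵀ)ᵀ * Δ - Eᵀ * Δ := by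
      conv_lhs => rw [hΔ]
      rw [Matrix.transpose_sub, Matrix.sub_mul]
    have h2 : Matrix.trace (Eᵀ * Δ) = t - frob E ^ 2 := by
      rw [hΔ, Matrix.mul_sub, Matrix.trace_sub, frob_sq_trace]
      congr 1
      rw [← Matrix.trace_transpose (Eᵀ * (F * Gᵀ)), Matrix.transpose_mul,
        Matrix.transpose_transpose, Matrix.transpose_mul, Matrix.transpose_transpose,
        Matrix.mul_assoc, Matrix.trace_mul_comm G, ht, he_def]
    have h3 : δ ^ 2 = Matrix.trace (Δᵀ * Δ) := (frob_sq_trace Δ).symm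
    rw [h3, h1, Matrix.trace_sub, hT1, h2]
    ring
  have hrt : (r : ℝ) - t ≥ δ ^ 2 / 2 := by linarith
  -- split K = D + M
  have hsplit : Matrix.trace ((F * K * Gᵀ)ᵀ * Δ)
      = Matrix.trace ((F * D * Gᵀ)ᵀ * Δ) + Matrix.trace ((F * M * Gᵀ)ᵀ * Δ) := by
    have h1 : F * M * Gᵀ = F * K * Gᵀ - F * D * Gᵀ := by
      rw [hM, hD, Matrix.mul_sub, Matrix.sub_mul]
    have hK : F * K * Gᵀ = F * D * Gᵀ + F * M * Gᵀ := by rw [h1]; abel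
    rw [hK, Matrix.transpose_add, Matrix.add_mul, Matrix.trace_add]
  -- bound on the M-term
  have hMterm : Matrix.trace ((F * M * Gᵀ)ᵀ * Δ) ≥ -(frob M * δ) := by
    have hfr : frob (F * M * Gᵀ) = frob M := by
      rw [frob_eq_sqrt_trace, frob_eq_sqrt_trace]
      congr 1
      have hexp : (F * M * Gᵀ)ᵀ * (F * M * Gᵀ)
          = G * (Mᵀ * (Fᵀ * (F * (M * Gᵀ)))) := by
        simp only [Matrix.transpose_mul, Matrix.transpose_transpose, Matrix.mul_assoc]
      rw [hexp, Matrix.trace_mul_comm G, ← Matrix.mul_assoc Fᵀ F, hF, Matrix.one_mul,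
        Matrix.mul_assoc Mᵀ (M * Gᵀ) G, Matrix.mul_assoc M Gᵀ G, hG, Matrix.mul_one]
    have h2 := abs_trace_le (F * M * Gᵀ) Δ
    rw [hfr] at h2
    have := neg_abs_le (Matrix.trace ((F * M * Gᵀ)ᵀ * Δ))
    linarith
  -- the D-term
  have hTD : Matrix.trace ((F * D * Gᵀ)ᵀ * Δ) = ∑ i, d i * (1 - e i i) := by
    rw [sandwich D, hD, Matrix.diagonal_transpose, Matrix.trace_diagonal]
    have h4 : Matrix.trace (Matrix.diagonal d * e) = ∑ i, d i * e i i := by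
      simp [Matrix.trace, Matrix.diag, Matrix.diagonal_mul]
    rw [h4, ← Finset.sum_sub_distrib]
    exact Finset.sum_congr rfl fun i _ => by ring
  have hsum : ∑ i, (1 - e i i) = (r : ℝ) - t := by
    rw [Finset.sum_sub_distrib, ht]
    simp [Matrix.trace, Matrix.diag]
  have hstep : ∑ i, d i * (1 - e i i) ≥ dr * ((r : ℝ) - t) := by
    rw [← hsum, Finset.mul_sum]
    apply Finset.sum_le_sum
    intro i _
    have h1 : (0 : ℝ) ≤ 1 - e i i := by linarith [he1 i]
    have h2 : dr ≤ d i := by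
      apply hanti i ⟨r - 1, by omega⟩
      exact Fin.mk_le_mk.mpr (by omega)
    exact mul_le_mul_of_nonneg_right h2 h1
  have hdrpos : (0 : ℝ) ≤ dr := le_of_lt (hpos _)
  have hfinal : dr * ((r : ℝ) - t) ≥ dr * (δ ^ 2 / 2) :=
    mul_le_mul_of_nonneg_left hrt hdrpos
  rw [hsplit, hTD]
  have : dr / 2 * δ ^ 2 = dr * (δ ^ 2 / 2) := by ring
  linarith
end

section
/- For i = 1,2 let Σ_{(i)} be the (p+m)×(p+m) block matrix with diagonal blocks I_p, I_m and off-diagonal blocks λ U_{(i)} V_{(i)}' and λ V_{(i)} U_{(i)}', where λ ∈ (0,1), U_{(i)} ∈ O(p,r), V_{(i)} ∈ O(m,r). Let ℙ_{(i)} be the distribution of n i.i.d. samples from N_{p+m}(0, Σ_{(i)}). Then the Kullback–Leibler divergence satisfies D(ℙ_{(1)} ‖ ℙ_{(2)}) = (n λ² / (2(1 − λ²))) · ‖U_{(1)}V_{(1)}' − U_{(2)}V_{(2)}'‖_F². -/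
open Matrix Real

/-- The Kullback–Leibler divergence between the laws of `n` i.i.d. samples of
`N(0,Σ₁)` and `N(0,Σ₂)` in dimension `d`, via the closed-form Gaussian formula
`(n/2)[Tr(Σ₂⁻¹Σ₁) − d − log det(Σ₂⁻¹Σ₁)]`. -/
noncomputable def klGaussian {d : Type*} [Fintype d] [DecidableEq d]
    (S1 S2 : Matrix d d ℝ) (n : ℕ) : ℝ :=
  (n : ℝ) / 2 * (Matrix.trace (S2⁻¹ * S1) - (Fintype.card d : ℝ)
    - Real.log (Matrix.det (S2⁻¹ * S1)))

lemma my_trace_fromBlocks {p m : ℕ} (A : Matrix (Fin p) (Fin p) ℝ) (B : Matrix (Fin p) (Fin m) ℝ)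
    (C : Matrix (Fin m) (Fin p) ℝ) (D : Matrix (Fin m) (Fin m) ℝ) :
    (fromBlocks A B C D).trace = A.trace + D.trace := by
  simp [Matrix.trace, Matrix.diag, Fintype.sum_sum_type, fromBlocks]

lemma my_frob_sq {p m : ℕ} (A : Matrix (Fin p) (Fin m) ℝ) :
    (∑ i, ∑ j, (A i j) ^ 2) = Matrix.trace (Aᵀ * A) := by
  simp only [Matrix.trace, Matrix.diag, Matrix.mul_apply, Matrix.transpose_apply, sq]
  rw [Finset.sum_comm]

lemma trace_cyc4 {k l o q : Type*} [Fintype k] [Fintype l] [Fintype o] [Fintype q]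
    (A : Matrix k l ℝ) (B : Matrix l o ℝ) (C : Matrix o q ℝ) (D : Matrix q k ℝ) :
    Matrix.trace (A * B * (C * D)) = Matrix.trace (D * A * (B * C)) := by
  simp only [← Matrix.mul_assoc]
  rw [Matrix.trace_mul_comm]
  simp only [← Matrix.mul_assoc]

/-- For `Σ_{(i)}` the block covariance with identity diagonal blocks and
off-diagonal blocks `λ U_{(i)} V_{(i)}'`, with `λ ∈ (0,1)` and `U_{(i)}, V_{(i)}`
having orthonormal columns, the KL divergence between the laws of `n` i.i.d.
samples from `N(0,Σ_{(1)})` and `N(0,Σ_{(2)})` equals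
`(nλ²/(2(1−λ²))) ‖U₁V₁' − U₂V₂'‖_F²`. -/
theorem stmt6 {p m r : ℕ} (lam : ℝ) (hlam0 : 0 < lam) (hlam1 : lam < 1)
    (U1 U2 : Matrix (Fin p) (Fin r) ℝ) (V1 V2 : Matrix (Fin m) (Fin r) ℝ)
    (hU1 : U1ᵀ * U1 = 1) (hU2 : U2ᵀ * U2 = 1)
    (hV1 : V1ᵀ * V1 = 1) (hV2 : V2ᵀ * V2 = 1) (n : ℕ) :
    klGaussian
        (Matrix.fromBlocks 1 (lam • (U1 * V1ᵀ)) (lam • (V1 * U1ᵀ)) 1)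
        (Matrix.fromBlocks 1 (lam • (U2 * V2ᵀ)) (lam • (V2 * U2ᵀ)) 1) n
      = (n : ℝ) * lam ^ 2 / (2 * (1 - lam ^ 2)) * frob (U1 * V1ᵀ - U2 * V2ᵀ) ^ 2 := by
  have hne : (1:ℝ) - lam^2 ≠ 0 := by nlinarith
  set c : ℝ := (1 - lam^2)⁻¹ with hcdef
  set M : Matrix (Fin p ⊕ Fin m) (Fin p ⊕ Fin m) ℝ :=
    fromBlocks (1 + (c*lam^2) • (U2*U2ᵀ)) ((-(c*lam)) • (U2*V2ᵀ))
      ((-(c*lam)) • (V2*U2ᵀ)) (1 + (c*lam^2) • (V2*V2ᵀ)) with hM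
  -- M is the right inverse of Σ₂
  have hMinv : (fromBlocks 1 (lam • (U2 * V2ᵀ)) (lam • (V2 * U2ᵀ)) 1) * M = 1 := by
    rw [hM, fromBlocks_multiply, ← fromBlocks_one]
    have k1 : (U2*V2ᵀ) * (V2*U2ᵀ) = U2*U2ᵀ := by
      rw [Matrix.mul_assoc, ← Matrix.mul_assoc V2ᵀ, hV2, Matrix.one_mul]
    have k2 : (U2*V2ᵀ) * (V2*V2ᵀ) = U2*V2ᵀ := by
      rw [Matrix.mul_assoc, ← Matrix.mul_assoc V2ᵀ, hV2, Matrix.one_mul]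
    have k3 : (V2*U2ᵀ) * (U2*V2ᵀ) = V2*V2ᵀ := by
      rw [Matrix.mul_assoc, ← Matrix.mul_assoc U2ᵀ, hU2, Matrix.one_mul]
    have k4 : (V2*U2ᵀ) * (U2*U2ᵀ) = V2*U2ᵀ := by
      rw [Matrix.mul_assoc, ← Matrix.mul_assoc U2ᵀ, hU2, Matrix.one_mul]
    rw [fromBlocks_inj]
    refine ⟨?_, ?_, ?_, ?_⟩ <;>
    · simp only [Matrix.one_mul, Matrix.mul_one, Matrix.mul_add, Matrix.add_mul,
        Matrix.smul_mul, Matrix.mul_smul, smul_smul, k1, k2, k3, k4]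
      match_scalars <;> (first | ring1 | linear_combination (-lam) * (inv_mul_cancel₀ hne))
  have hinv : (fromBlocks 1 (lam • (U2 * V2ᵀ)) (lam • (V2 * U2ᵀ)) 1)⁻¹ = M :=
    inv_eq_right_inv hMinv
  -- the common cross trace
  set t : ℝ := Matrix.trace (U1ᵀ * U2 * (V2ᵀ * V1)) with ht
  have ta : Matrix.trace (U2 * V2ᵀ * (V1 * U1ᵀ)) = t := by
    rw [ht, trace_cyc4]
  have tb : Matrix.trace (V2 * U2ᵀ * (U1 * V1ᵀ)) = t := by
    rw [trace_cyc4, ht]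
    rw [show V1ᵀ * V2 * (U2ᵀ * U1) = (U1ᵀ * U2 * (V2ᵀ * V1))ᵀ by
      simp [Matrix.transpose_mul, Matrix.mul_assoc]]
    rw [Matrix.trace_transpose]
  have tc : Matrix.trace (V1 * U1ᵀ * (U2 * V2ᵀ)) = t := by
    rw [trace_cyc4, trace_cyc4, trace_cyc4, ht]
  have hr1 : Matrix.trace (U2 * U2ᵀ) = (r : ℝ) := by
    rw [Matrix.trace_mul_comm, hU2, Matrix.trace_one]; simp
  have hr2 : Matrix.trace (V2 * V2ᵀ) = (r : ℝ) := by
    rw [Matrix.trace_mul_comm, hV2, Matrix.trace_one]; simp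
  have hr3 : Matrix.trace (V1 * U1ᵀ * (U1 * V1ᵀ)) = (r : ℝ) := by
    rw [Matrix.mul_assoc, ← Matrix.mul_assoc U1ᵀ, hU1, Matrix.one_mul,
      Matrix.trace_mul_comm, hV1, Matrix.trace_one]; simp
  have hr4 : Matrix.trace (V2 * U2ᵀ * (U2 * V2ᵀ)) = (r : ℝ) := by
    rw [Matrix.mul_assoc, ← Matrix.mul_assoc U2ᵀ, hU2, Matrix.one_mul,
      Matrix.trace_mul_comm, hV2, Matrix.trace_one]; simp
  -- trace of M * Σ₁
  have htrace : Matrix.trace (M * fromBlocks 1 (lam • (U1 * V1ᵀ)) (lam • (V1 * U1ᵀ)) 1)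
      = (p : ℝ) + (m : ℝ) + 2*(c*lam^2)*((r : ℝ) - t) := by
    rw [hM, fromBlocks_multiply, my_trace_fromBlocks]
    simp only [Matrix.mul_one, Matrix.one_mul, Matrix.smul_mul, Matrix.mul_smul, smul_smul,
      Matrix.trace_add, Matrix.trace_smul, smul_eq_mul, ta, tb, hr1, hr2, Matrix.trace_one]
    simp only [Fintype.card_fin]
    ring
  -- determinants
  have hdS1 : (fromBlocks 1 (lam • (U1 * V1ᵀ)) (lam • (V1 * U1ᵀ)) 1).det = (1 - lam^2)^r := by
    rw [Matrix.det_fromBlocks_one₁₁]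
    have e1 : (1 : Matrix (Fin m) (Fin m) ℝ) - (lam • (V1*U1ᵀ)) * (lam • (U1*V1ᵀ))
        = 1 + ((-(lam*lam)) • V1) * V1ᵀ := by
      rw [Matrix.smul_mul, Matrix.mul_smul, smul_smul, Matrix.smul_mul,
        Matrix.mul_assoc, ← Matrix.mul_assoc U1ᵀ, hU1, Matrix.one_mul, neg_smul,
        ← sub_eq_add_neg]
    rw [e1, Matrix.det_one_add_mul_comm, Matrix.mul_smul, hV1]
    rw [show (1 : Matrix (Fin r) (Fin r) ℝ) + (-(lam*lam)) • 1 = (1 - lam^2) • 1 by module]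
    rw [Matrix.det_smul, Matrix.det_one, mul_one, Fintype.card_fin]
  have hdS2 : (fromBlocks 1 (lam • (U2 * V2ᵀ)) (lam • (V2 * U2ᵀ)) 1).det = (1 - lam^2)^r := by
    rw [Matrix.det_fromBlocks_one₁₁]
    have e1 : (1 : Matrix (Fin m) (Fin m) ℝ) - (lam • (V2*U2ᵀ)) * (lam • (U2*V2ᵀ))
        = 1 + ((-(lam*lam)) • V2) * V2ᵀ := by
      rw [Matrix.smul_mul, Matrix.mul_smul, smul_smul, Matrix.smul_mul,
        Matrix.mul_assoc, ← Matrix.mul_assoc U2ᵀ, hU2, Matrix.one_mul, neg_smul,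
        ← sub_eq_add_neg]
    rw [e1, Matrix.det_one_add_mul_comm, Matrix.mul_smul, hV2]
    rw [show (1 : Matrix (Fin r) (Fin r) ℝ) + (-(lam*lam)) • 1 = (1 - lam^2) • 1 by module]
    rw [Matrix.det_smul, Matrix.det_one, mul_one, Fintype.card_fin]
  have hdMS1 : (M * fromBlocks 1 (lam • (U1 * V1ᵀ)) (lam • (V1 * U1ᵀ)) 1).det = 1 := by
    have h2 : (fromBlocks 1 (lam • (U2 * V2ᵀ)) (lam • (V2 * U2ᵀ)) 1).det * M.det = 1 := by
      rw [← Matrix.det_mul, hMinv, Matrix.det_one]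
    rw [hdS2] at h2
    rw [Matrix.det_mul, hdS1]
    linear_combination h2
  -- frobenius norm
  have hfrob : frob (U1 * V1ᵀ - U2 * V2ᵀ) ^ 2 = 2*(r : ℝ) - 2*t := by
    rw [frob, Real.sq_sqrt (by positivity), my_frob_sq]
    simp only [Matrix.transpose_sub, Matrix.transpose_mul, Matrix.transpose_transpose,
      Matrix.sub_mul, Matrix.mul_sub, Matrix.trace_sub]
    rw [hr3, hr4, tb, tc]
    ring
  -- assemble
  rw [klGaussian, hinv, htrace, hdMS1, Real.log_one, hfrob]
  simp only [Fintype.card_sum, Fintype.card_fin]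
  rw [hcdef]
  push_cast
  field_simp
  ring
end
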